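/- (Lipschitz continuity of the mapping λ ↦ h(λ).) For every real κ̃ ≥ 1 and all λ₁, λ₂ ∈ [0, 1], ‖h(λ₁) − h(λ₂)‖ ≤ √((6π² + 1)/12) · κ̃ · |λ₁ − λ₂|. -/

import Mathlib

/-- The filter function `f`: `f(λ) = 1/(2κ̃λ)` for `λ ≥ 1/κ̃`,
`f(λ) = -(1/2)cos(πκ̃λ)` for `1/(2κ̃) ≤ λ ≤ 1/κ̃`, and `f(λ) = 0` for `λ ≤ 1/(2κ̃)`. -/
noncomputable def ff (κ lam : ℝ) : ℝ :=
  if 1 / κ ≤ lam then 1 / (2 * κ * lam)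
  else if 1 / (2 * κ) ≤ lam then -(1 / 2) * Real.cos (Real.pi * κ * lam)
  else 0

/-- The filter function `g`: `g(λ) = 0` for `λ ≥ 1/κ̃`,
`g(λ) = (1/2)sin(πκ̃λ)` for `1/(2κ̃) ≤ λ ≤ 1/κ̃`, and `g(λ) = 1/2` for `λ ≤ 1/(2κ̃)`. -/
noncomputable def gg (κ lam : ℝ) : ℝ :=
  if 1 / κ ≤ lam then 0
  else if 1 / (2 * κ) ≤ lam then (1 / 2) * Real.sin (Real.pi * κ * lam)
  else 1 / 2

/-- The flag-register state `h(λ) = (f(λ), g(λ), √(1 - f(λ)² - g(λ)²))` as a vector in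
Euclidean `ℝ³`. -/
noncomputable def hvec (κ lam : ℝ) : EuclideanSpace ℝ (Fin 3) :=
  (WithLp.equiv 2 (Fin 3 → ℝ)).symm
    ![ff κ lam, gg κ lam, Real.sqrt (1 - ff κ lam ^ 2 - gg κ lam ^ 2)]

/-- Elementary real-valued Lipschitz-on-a-set predicate. -/
def LipOn (c : ℝ) (F : ℝ → ℝ) (s : Set ℝ) : Prop :=
  ∀ ⦃x⦄, x ∈ s → ∀ ⦃y⦄, y ∈ s → |F x - F y| ≤ c * |x - y|

lemma lipOn_of_eqOn {c : ℝ} {F G : ℝ → ℝ} {s : Set ℝ} (h : Set.EqOn F G s)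
    (hG : LipOn c G s) : LipOn c F s := fun x hx y hy => by
  rw [h hx, h hy]; exact hG hx hy

lemma lipOn_const {c : ℝ} (hc : 0 ≤ c) (k : ℝ) (s : Set ℝ) :
    LipOn c (fun _ => k) s := fun x _ y _ => by
  simp only [sub_self, abs_zero]
  positivity

lemma lipOn_glue {c : ℝ} {F : ℝ → ℝ} {a b d : ℝ}
    (h1 : LipOn c F (Set.Icc a b)) (h2 : LipOn c F (Set.Icc b d))
    (hab : a ≤ b) (hbd : b ≤ d) : LipOn c F (Set.Icc a d) := by
  intro x hx y hy
  rcases le_or_gt x b with hxb | hxb <;> rcases le_or_gt y b with hyb | hyb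
  · exact h1 ⟨hx.1, hxb⟩ ⟨hy.1, hyb⟩
  · have e1 := h1 ⟨hx.1, hxb⟩ (Set.right_mem_Icc.2 hab)
    have e2 := h2 (Set.left_mem_Icc.2 hbd) ⟨hyb.le, hy.2⟩
    have hxy : x ≤ y := hxb.trans hyb.le
    calc |F x - F y| ≤ |F x - F b| + |F b - F y| := abs_sub_le _ _ _
      _ ≤ c * |x - b| + c * |b - y| := add_le_add e1 e2
      _ = c * |x - y| := by
          rw [abs_of_nonpos (by linarith), abs_of_nonpos (by linarith),
            abs_of_nonpos (by linarith)]; ring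
  · have e1 := h2 ⟨hxb.le, hx.2⟩ (Set.left_mem_Icc.2 hbd)
    have e2 := h1 (Set.right_mem_Icc.2 hab) ⟨hy.1, hyb⟩
    have hxy : y ≤ x := hyb.trans hxb.le
    calc |F x - F y| ≤ |F x - F b| + |F b - F y| := abs_sub_le _ _ _
      _ ≤ c * |x - b| + c * |b - y| := add_le_add e1 e2
      _ = c * |x - y| := by
          rw [abs_of_nonneg (by linarith), abs_of_nonneg (by linarith),
            abs_of_nonneg (by linarith)]; ring
  · exact h2 ⟨hxb.le, hx.2⟩ ⟨hyb.le, hy.2⟩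

lemma lipOn_of_deriv {c : ℝ} {F F' : ℝ → ℝ} {a b : ℝ}
    (hF : ∀ x ∈ Set.Icc a b, HasDerivAt F (F' x) x)
    (hbd : ∀ x ∈ Set.Icc a b, |F' x| ≤ c) : LipOn c F (Set.Icc a b) := by
  intro x hx y hy
  have := Convex.norm_image_sub_le_of_norm_hasDerivWithin_le
    (f := F) (f' := F') (s := Set.Icc a b)
    (fun z hz => (hF z hz).hasDerivWithinAt)
    (fun z hz => by simpa [Real.norm_eq_abs] using hbd z hz)
    (convex_Icc a b) hy hx
  simpa [Real.norm_eq_abs] using this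

section pieces

variable {κ : ℝ} (hκ : 1 ≤ κ)

lemma kpos (hκ : 1 ≤ κ) : 0 < κ := lt_of_lt_of_le one_pos hκ

lemma half_le_inv (hκ : 1 ≤ κ) : 1 / (2 * κ) ≤ 1 / κ := by
  have := kpos hκ
  rw [div_le_div_iff₀ (by positivity) (by positivity)]
  nlinarith

lemma my_inv_le_one (hκ : 1 ≤ κ) : 1 / κ ≤ 1 := by
  rw [div_le_one (kpos hκ)]; exact hκ

lemma lip_ff (hκ : 1 ≤ κ) : LipOn (Real.pi * κ / 2) (ff κ) (Set.Icc 0 1) := by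
  have hk := kpos hκ
  have hπ := Real.pi_pos
  have hc : 0 ≤ Real.pi * κ / 2 := by positivity
  have p1 : LipOn (Real.pi * κ / 2) (ff κ) (Set.Icc 0 (1 / (2 * κ))) := by
    apply lipOn_of_eqOn (G := fun _ => 0) _ (lipOn_const hc 0 _)
    intro x hx
    have hx2 : x < 1 / κ := lt_of_le_of_lt hx.2 (by
      rw [div_lt_div_iff₀ (by positivity) hk]; nlinarith)
    simp only [ff, if_neg (not_le.2 hx2)]
    split_ifs with h
    · have hxe : x = 1 / (2 * κ) := le_antisymm hx.2 h
      rw [hxe]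
      have : Real.pi * κ * (1 / (2 * κ)) = Real.pi / 2 := by field_simp
      rw [this, Real.cos_pi_div_two]; ring
    · rfl
  have p2 : LipOn (Real.pi * κ / 2) (ff κ) (Set.Icc (1 / (2 * κ)) (1 / κ)) := by
    apply lipOn_of_eqOn (G := fun x => -(1 / 2) * Real.cos (Real.pi * κ * x))
    · intro x hx
      simp only [ff]
      split_ifs with h1 h2
      · have hxe : x = 1 / κ := le_antisymm hx.2 h1
        rw [hxe]
        have : Real.pi * κ * (1 / κ) = Real.pi := by field_simp
        rw [this, Real.cos_pi]
        field_simp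
      · rfl
      · exact absurd hx.1 h2
    · apply lipOn_of_deriv (F' := fun x => Real.pi * κ / 2 * Real.sin (Real.pi * κ * x))
      · intro x _
        have h1 : HasDerivAt (fun x : ℝ => Real.pi * κ * x) (Real.pi * κ) x := by
          simpa using (hasDerivAt_id x).const_mul (Real.pi * κ)
        have h2 := (Real.hasDerivAt_cos (Real.pi * κ * x)).comp x h1
        have h3 := h2.const_mul (-(1 / 2) : ℝ)
        refine h3.congr_deriv ?_
        ring
      · intro x _
        rw [abs_mul]
        have : |Real.pi * κ / 2| = Real.pi * κ / 2 := abs_of_nonneg hc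
        rw [this]
        exact mul_le_of_le_one_right hc (Real.abs_sin_le_one _)
  have p3 : LipOn (Real.pi * κ / 2) (ff κ) (Set.Icc (1 / κ) 1) := by
    apply lipOn_of_eqOn (G := fun x => (2 * κ * x)⁻¹)
    · intro x hx
      simp only [ff]
      rw [if_pos hx.1, one_div]
    · apply lipOn_of_deriv (F' := fun x => -(2 * κ) / (2 * κ * x) ^ 2)
      · intro x hx
        have hxpos : 0 < x := lt_of_lt_of_le (by positivity) hx.1
        have h1 : HasDerivAt (fun x : ℝ => 2 * κ * x) (2 * κ) x := by
          simpa using (hasDerivAt_id x).const_mul (2 * κ)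
        exact h1.inv (by positivity)
      · intro x hx
        have hxk : 1 ≤ κ * x := by
          have := hx.1
          rw [div_le_iff₀ hk] at this
          linarith [this]
        have hxpos : 0 < x := by nlinarith
        rw [abs_div, abs_neg, abs_of_nonneg (by positivity : (0:ℝ) ≤ 2 * κ),
          abs_of_nonneg (by positivity : (0:ℝ) ≤ (2 * κ * x) ^ 2)]
        rw [div_le_iff₀ (by positivity)]
        have hπ3 : 3 ≤ Real.pi := by linarith [Real.pi_gt_three]
        nlinarith [sq_nonneg (κ * x - 1), sq_nonneg (κ*x)]
  exact lipOn_glue (lipOn_glue p1 p2 (by positivity) (half_le_inv hκ))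
    p3 (by positivity) (my_inv_le_one hκ)

lemma lip_gg (hκ : 1 ≤ κ) : LipOn (Real.pi * κ / 2) (gg κ) (Set.Icc 0 1) := by
  have hk := kpos hκ
  have hπ := Real.pi_pos
  have hc : 0 ≤ Real.pi * κ / 2 := by positivity
  have p1 : LipOn (Real.pi * κ / 2) (gg κ) (Set.Icc 0 (1 / (2 * κ))) := by
    apply lipOn_of_eqOn (G := fun _ => (1:ℝ) / 2) _ (lipOn_const hc _ _)
    intro x hx
    have hx2 : x < 1 / κ := lt_of_le_of_lt hx.2 (by
      rw [div_lt_div_iff₀ (by positivity) hk]; nlinarith)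
    simp only [gg, if_neg (not_le.2 hx2)]
    split_ifs with h
    · have hxe : x = 1 / (2 * κ) := le_antisymm hx.2 h
      rw [hxe]
      have : Real.pi * κ * (1 / (2 * κ)) = Real.pi / 2 := by field_simp
      rw [this, Real.sin_pi_div_two]; ring
    · rfl
  have p2 : LipOn (Real.pi * κ / 2) (gg κ) (Set.Icc (1 / (2 * κ)) (1 / κ)) := by
    apply lipOn_of_eqOn (G := fun x => (1 / 2) * Real.sin (Real.pi * κ * x))
    · intro x hx
      simp only [gg]
      split_ifs with h1 h2
      · have hxe : x = 1 / κ := le_antisymm hx.2 h1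
        rw [hxe]
        have : Real.pi * κ * (1 / κ) = Real.pi := by field_simp
        rw [this, Real.sin_pi]; ring
      · rfl
      · exact absurd hx.1 h2
    · apply lipOn_of_deriv (F' := fun x => Real.pi * κ / 2 * Real.cos (Real.pi * κ * x))
      · intro x _
        have h1 : HasDerivAt (fun x : ℝ => Real.pi * κ * x) (Real.pi * κ) x := by
          simpa using (hasDerivAt_id x).const_mul (Real.pi * κ)
        have h2 := (Real.hasDerivAt_sin (Real.pi * κ * x)).comp x h1
        have h3 := h2.const_mul ((1 : ℝ) / 2)
        refine h3.congr_deriv ?_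
        ring
      · intro x _
        rw [abs_mul]
        have : |Real.pi * κ / 2| = Real.pi * κ / 2 := abs_of_nonneg hc
        rw [this]
        exact mul_le_of_le_one_right hc (Real.abs_cos_le_one _)
  have p3 : LipOn (Real.pi * κ / 2) (gg κ) (Set.Icc (1 / κ) 1) := by
    apply lipOn_of_eqOn (G := fun _ => (0:ℝ)) _ (lipOn_const hc _ _)
    intro x hx
    simp only [gg, if_pos hx.1]
  exact lipOn_glue (lipOn_glue p1 p2 (by positivity) (half_le_inv hκ))
    p3 (by positivity) (my_inv_le_one hκ)

lemma lip_ss (hκ : 1 ≤ κ) :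
    LipOn (κ / (2 * Real.sqrt 3))
      (fun x => Real.sqrt (1 - ff κ x ^ 2 - gg κ x ^ 2)) (Set.Icc 0 1) := by
  have hk := kpos hκ
  have hs3 : (0:ℝ) < Real.sqrt 3 := Real.sqrt_pos.2 (by norm_num)
  have hs3sq : Real.sqrt 3 ^ 2 = 3 := Real.sq_sqrt (by norm_num)
  have hc : 0 ≤ κ / (2 * Real.sqrt 3) := by positivity
  have p1 : LipOn (κ / (2 * Real.sqrt 3))
      (fun x => Real.sqrt (1 - ff κ x ^ 2 - gg κ x ^ 2)) (Set.Icc 0 (1 / κ)) := by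
    apply lipOn_of_eqOn (G := fun _ => Real.sqrt (3 / 4)) _ (lipOn_const hc _ _)
    intro x hx
    have hsum : ff κ x ^ 2 + gg κ x ^ 2 = 1 / 4 := by
      simp only [ff, gg]
      split_ifs with h1 h2
      · have hxe : x = 1 / κ := le_antisymm hx.2 h1
        rw [hxe]
        have : 2 * κ * (1 / κ) = 2 := by field_simp
        rw [this]; norm_num
      · have := Real.sin_sq_add_cos_sq (Real.pi * κ * x)
        nlinarith [this]
      · norm_num
    have : 1 - ff κ x ^ 2 - gg κ x ^ 2 = 3 / 4 := by linarith
    simp only [this]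
  have p2 : LipOn (κ / (2 * Real.sqrt 3))
      (fun x => Real.sqrt (1 - ff κ x ^ 2 - gg κ x ^ 2)) (Set.Icc (1 / κ) 1) := by
    apply lipOn_of_eqOn (G := fun x => Real.sqrt (1 - ((2 * κ * x)⁻¹) ^ 2))
    · intro x hx
      simp only [ff, gg]
      rw [if_pos hx.1, if_pos hx.1, one_div]
      norm_num
    · apply lipOn_of_deriv
        (F' := fun x => (2 * (2 * κ * x)⁻¹ * ((2 * κ) / (2 * κ * x) ^ 2)) /
          (2 * Real.sqrt (1 - ((2 * κ * x)⁻¹) ^ 2)))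
      · intro x hx
        have hxk : 1 ≤ κ * x := by
          have := hx.1; rw [div_le_iff₀ hk] at this; linarith
        have hxpos : 0 < x := by nlinarith
        have ht : (0:ℝ) < 2 * κ * x := by positivity
        have ht2 : 2 ≤ 2 * κ * x := by nlinarith
        have hq : 3 / 4 ≤ 1 - ((2 * κ * x)⁻¹) ^ 2 := by
          have : ((2 * κ * x)⁻¹) ^ 2 ≤ 1 / 4 := by
            rw [inv_pow]
            rw [inv_le_iff_one_le_mul₀ (by positivity)]  -- may need adjustment
            nlinarith
          linarith
        have h1 : HasDerivAt (fun x : ℝ => 2 * κ * x) (2 * κ) x := by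
          simpa using (hasDerivAt_id x).const_mul (2 * κ)
        have h2 : HasDerivAt (fun x : ℝ => (2 * κ * x)⁻¹)
            (-(2 * κ) / (2 * κ * x) ^ 2) x := h1.inv (ne_of_gt ht)
        have h3 : HasDerivAt (fun x : ℝ => 1 - ((2 * κ * x)⁻¹) ^ 2)
            (2 * (2 * κ * x)⁻¹ * ((2 * κ) / (2 * κ * x) ^ 2)) x := by
          have := (h2.pow 2).const_sub 1
          refine this.congr_deriv ?_
          norm_num
          ring
        have h4 := h3.sqrt (by nlinarith)
        exact h4
      · intro x hx
        have hxk : 1 ≤ κ * x := by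
          have := hx.1; rw [div_le_iff₀ hk] at this; linarith
        have hxpos : 0 < x := by nlinarith
        have ht : (0:ℝ) < 2 * κ * x := by positivity
        have ht2 : 2 ≤ 2 * κ * x := by nlinarith
        have hq : 3 / 4 ≤ 1 - ((2 * κ * x)⁻¹) ^ 2 := by
          have : ((2 * κ * x)⁻¹) ^ 2 ≤ 1 / 4 := by
            rw [inv_pow, inv_le_iff_one_le_mul₀ (by positivity)]
            nlinarith
          linarith
        have hqs : Real.sqrt 3 / 2 ≤ Real.sqrt (1 - ((2 * κ * x)⁻¹) ^ 2) := by
          have h34 : Real.sqrt (3 / 4) = Real.sqrt 3 / 2 := by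
            rw [Real.sqrt_div (by norm_num : (0:ℝ) ≤ 3) 4,
              show (4:ℝ) = 2 ^ 2 by norm_num, Real.sqrt_sq (by norm_num : (0:ℝ) ≤ 2)]
          rw [← h34]
          exact Real.sqrt_le_sqrt hq
        have hqpos : 0 < Real.sqrt (1 - ((2 * κ * x)⁻¹) ^ 2) :=
          lt_of_lt_of_le (by positivity) hqs
        set q := Real.sqrt (1 - ((2 * κ * x)⁻¹) ^ 2) with hqdef
        set t := 2 * κ * x with htdef
        have hA : (2 * t⁻¹ * ((2 * κ) / t ^ 2)) / (2 * q) = 2 * κ / (t ^ 3 * q) := by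
          field_simp
        have habs : |(2 * t⁻¹ * ((2 * κ) / t ^ 2)) / (2 * q)| =
            (2 * t⁻¹ * ((2 * κ) / t ^ 2)) / (2 * q) := by
          apply abs_of_nonneg
          positivity
        rw [habs, hA]
        have ht3 : (8:ℝ) ≤ t ^ 3 := by nlinarith
        have hden : 4 * Real.sqrt 3 ≤ t ^ 3 * q := by nlinarith
        calc 2 * κ / (t ^ 3 * q) ≤ 2 * κ / (4 * Real.sqrt 3) := by
              apply div_le_div_of_nonneg_left (by positivity) (by positivity) hden
          _ = κ / (2 * Real.sqrt 3) := by ring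
  exact lipOn_glue p1 p2 (by positivity) (my_inv_le_one hκ)

end pieces

set_option maxHeartbeats 1000000 in
theorem stmt_14 (κ : ℝ) (hκ : 1 ≤ κ) (lam₁ lam₂ : ℝ)
    (h₁ : lam₁ ∈ Set.Icc (0 : ℝ) 1) (h₂ : lam₂ ∈ Set.Icc (0 : ℝ) 1) :
    ‖hvec κ lam₁ - hvec κ lam₂‖ ≤
      Real.sqrt ((6 * Real.pi ^ 2 + 1) / 12) * κ * |lam₁ - lam₂| := by
  have hk := kpos hκ
  have hπ := Real.pi_pos
  have hs3 : (0:ℝ) < Real.sqrt 3 := Real.sqrt_pos.2 (by norm_num)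
  have hs3sq : Real.sqrt 3 ^ 2 = 3 := Real.sq_sqrt (by norm_num)
  set d := |lam₁ - lam₂| with hd
  have hdnn : 0 ≤ d := abs_nonneg _
  have hf := lip_ff hκ h₁ h₂
  have hg := lip_gg hκ h₁ h₂
  have hs := lip_ss hκ h₁ h₂
  set a := ff κ lam₁ - ff κ lam₂ with ha
  set b := gg κ lam₁ - gg κ lam₂ with hb
  set c := Real.sqrt (1 - ff κ lam₁ ^ 2 - gg κ lam₁ ^ 2) -
    Real.sqrt (1 - ff κ lam₂ ^ 2 - gg κ lam₂ ^ 2) with hcc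
  have hnorm : ‖hvec κ lam₁ - hvec κ lam₂‖ = Real.sqrt (a ^ 2 + b ^ 2 + c ^ 2) := by
    rw [EuclideanSpace.norm_eq, Fin.sum_univ_three]
    simp only [PiLp.sub_apply, hvec, WithLp.equiv_symm_apply, PiLp.toLp_apply,
      Matrix.cons_val_zero, Matrix.cons_val_one, Matrix.head_cons,
      Matrix.cons_val_two, Matrix.tail_cons, Real.norm_eq_abs, sq_abs]
    rfl
  rw [hnorm]
  have key : a ^ 2 + b ^ 2 + c ^ 2 ≤ (6 * Real.pi ^ 2 + 1) / 12 * (κ * d) ^ 2 := by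
    have e1 : a ^ 2 ≤ (Real.pi * κ / 2 * d) ^ 2 := by
      have := abs_nonneg a
      nlinarith [hf, abs_nonneg a, neg_abs_le a, le_abs_self a]
    have e2 : b ^ 2 ≤ (Real.pi * κ / 2 * d) ^ 2 := by
      nlinarith [hg, abs_nonneg b, neg_abs_le b, le_abs_self b]
    have e3 : c ^ 2 ≤ (κ / (2 * Real.sqrt 3) * d) ^ 2 := by
      nlinarith [hs, abs_nonneg c, neg_abs_le c, le_abs_self c]
    have e4 : (κ / (2 * Real.sqrt 3) * d) ^ 2 = κ ^ 2 * d ^ 2 / 12 := by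
      rw [mul_pow, div_pow, mul_pow]
      rw [hs3sq]
      ring
    nlinarith [e1, e2, e3, e4]
  calc Real.sqrt (a ^ 2 + b ^ 2 + c ^ 2)
      ≤ Real.sqrt ((6 * Real.pi ^ 2 + 1) / 12 * (κ * d) ^ 2) := Real.sqrt_le_sqrt key
    _ = Real.sqrt ((6 * Real.pi ^ 2 + 1) / 12) * (κ * d) := by
        rw [Real.sqrt_mul (by positivity), Real.sqrt_sq (by positivity)]
    _ = Real.sqrt ((6 * Real.pi ^ 2 + 1) / 12) * κ * d := by ring
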